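/- For α ≥ 0, let D_α = diag(e^α, e^{−α/2}, e^{−α/2}) ∈ SL(3,ℝ) and for δ ∈ [0,1] let x_δ ∈ SO(3) be the rotation matrix with first column (δ, √(1−δ²), 0), second column (−√(1−δ²), δ, 0), third column (0,0,1). Then the smallest singular value of D_α x_δ D_α equals e^{−α}; and if the singular values of D_α x_δ D_α are e^{(1+ε)α} ≥ e^{−εα} ≥ e^{−α} for some ε ∈ [−1/2, 1], then δ ≤ e^{(ε−1)α}. -/

import Mathlib

open Real

/-- The operator norm of a `3×3` real matrix acting on Euclidean `ℝ³`. -/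
noncomputable def opNorm3 (g : Matrix (Fin 3) (Fin 3) ℝ) : ℝ :=
  ‖LinearMap.toContinuousLinearMap (Matrix.toEuclideanLin (𝕜 := ℝ) g)‖

/-- `D_α = diag(e^α, e^{−α/2}, e^{−α/2})`. -/
noncomputable def Dmat (α : ℝ) : Matrix (Fin 3) (Fin 3) ℝ :=
  Matrix.diagonal ![exp α, exp (-α / 2), exp (-α / 2)]

/-- The rotation `x_δ` with first column `(δ, √(1−δ²), 0)`. -/
noncomputable def xmat (δ : ℝ) : Matrix (Fin 3) (Fin 3) ℝ :=
  !![δ, -sqrt (1 - δ ^ 2), 0;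
     sqrt (1 - δ ^ 2), δ, 0;
     0, 0, 1]

lemma euclid_abs_le (x : EuclideanSpace ℝ (Fin 3)) (i : Fin 3) : |x i| ≤ ‖x‖ := by
  rw [EuclideanSpace.norm_eq]
  rw [show |x i| = Real.sqrt (‖x i‖ ^ 2) by rw [Real.sqrt_sq (norm_nonneg _)]; exact (Real.norm_eq_abs _).symm]
  exact Real.sqrt_le_sqrt (Finset.single_le_sum (f := fun j => ‖x j‖ ^ 2) (fun _ _ => sq_nonneg _) (Finset.mem_univ i))

lemma abs_entry_le_opNorm3 (g : Matrix (Fin 3) (Fin 3) ℝ) (i j : Fin 3) :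
    |g i j| ≤ opNorm3 g := by
  have h := (LinearMap.toContinuousLinearMap (Matrix.toEuclideanLin (𝕜 := ℝ) g)).le_opNorm
    (EuclideanSpace.single j 1)
  rw [EuclideanSpace.norm_single, norm_one, mul_one] at h
  refine le_trans ?_ h
  refine le_trans ?_ (euclid_abs_le _ i)
  apply le_of_eq
  congr 1
  simp [Matrix.toEuclideanLin_apply]

lemma opNorm3_le (g : Matrix (Fin 3) (Fin 3) ℝ) {C : ℝ} (hC : 0 ≤ C)
    (h : ∀ v : Fin 3 → ℝ,
      (g.mulVec v 0) ^ 2 + (g.mulVec v 1) ^ 2 + (g.mulVec v 2) ^ 2 ≤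
        C ^ 2 * ((v 0) ^ 2 + (v 1) ^ 2 + (v 2) ^ 2)) :
    opNorm3 g ≤ C := by
  apply ContinuousLinearMap.opNorm_le_bound _ hC
  intro v
  rw [LinearMap.coe_toContinuousLinearMap']
  rw [Matrix.toEuclideanLin_apply]
  rw [EuclideanSpace.norm_eq, EuclideanSpace.norm_eq]
  simp only [WithLp.ofLp_toLp, Real.norm_eq_abs, sq_abs]
  rw [Fin.sum_univ_three, Fin.sum_univ_three]
  rw [show C = Real.sqrt (C ^ 2) from (Real.sqrt_sq hC).symm, ← Real.sqrt_mul (sq_nonneg C)]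
  exact Real.sqrt_le_sqrt (h _)

/-- the smallest singular value of `D_α x_δ D_α` equals `e^{−α}`, i.e.
`‖(D_α x_δ D_α)⁻¹‖ = e^α`; and if the singular values of `D_α x_δ D_α` are
`e^{(1+ε)α} ≥ e^{−εα} ≥ e^{−α}` for some `ε ∈ [−1/2,1]` (equivalently, given the
determinant and the smallest singular value, `‖D_α x_δ D_α‖ = e^{(1+ε)α}`), then
`δ ≤ e^{(ε−1)α}`. -/
theorem stmt13 (α : ℝ) (hα : 0 ≤ α) (δ : ℝ) (hδ0 : 0 ≤ δ) (hδ1 : δ ≤ 1) :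
    opNorm3 ((Dmat α * xmat δ * Dmat α)⁻¹) = exp α ∧
    (∀ ε : ℝ, -(1 / 2) ≤ ε → ε ≤ 1 →
      opNorm3 (Dmat α * xmat δ * Dmat α) = exp ((1 + ε) * α) →
      δ ≤ exp ((ε - 1) * α)) := by
  set a := exp α with ha
  set b := exp (-α / 2) with hb
  set s := sqrt (1 - δ ^ 2) with hsdef
  have hb0 : 0 < b := exp_pos _
  have ha0 : 0 < a := exp_pos _
  have hab : a * b ^ 2 = 1 := by
    rw [ha, hb, sq, ← Real.exp_add, ← Real.exp_add, ← Real.exp_zero]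
    congr 1; ring
  have hs : s ^ 2 = 1 - δ ^ 2 := Real.sq_sqrt (by nlinarith)
  have hs0 : 0 ≤ s := Real.sqrt_nonneg _
  have hb1 : b ≤ 1 := exp_le_one_iff.mpr (by linarith)
  have ha1 : 1 ≤ a := Real.one_le_exp hα
  have hM : Dmat α * xmat δ * Dmat α =
      !![a * δ * a, a * -s * b, 0; b * s * a, b * δ * b, 0; 0, 0, b * b] := by
    ext i j
    fin_cases i <;> fin_cases j <;>
      simp [Dmat, xmat, Matrix.mul_apply, Fin.sum_univ_three, ← ha, ← hb, ← hsdef]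
  have hMinv : (Dmat α * xmat δ * Dmat α)⁻¹ =
      !![δ * b ^ 4, s * b, 0; -(s * b), δ * a, 0; 0, 0, a] := by
    rw [hM]
    apply Matrix.inv_eq_right_inv
    ext i j
    fin_cases i <;> fin_cases j <;>
      simp [Matrix.mul_apply, Fin.sum_univ_three, Matrix.one_apply]
    · linear_combination (δ ^ 2 * (a * b ^ 2 + 1) + s ^ 2) * hab + hs
    · ring
    · linear_combination (b ^ 3 * δ * s) * hab
    · linear_combination (s ^ 2 + δ ^ 2) * hab + hs
    · linear_combination hab
  have hb6 : b ^ 6 ≤ 1 := pow_le_one₀ hb0.le hb1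
  have hup : opNorm3 (!![δ * b ^ 4, s * b, 0; -(s * b), δ * a, 0; 0, 0, a]) ≤ a := by
    apply opNorm3_le _ ha0.le
    intro v
    simp [Matrix.mulVec, dotProduct, Fin.sum_univ_three]
    have key : (a ^ 2 * (v 0 ^ 2 + v 1 ^ 2) - (δ * b ^ 4 * v 0 + s * b * v 1) ^ 2
        - (-(s * b) * v 0 + δ * a * v 1) ^ 2) * b ^ 4
        = (1 - b ^ 6) * ((δ * b ^ 3 * v 0 + s * v 1) ^ 2 + v 0 ^ 2) := by
      linear_combination ((a * b ^ 2 + 1) * (v 0 ^ 2 + v 1 ^ 2) + 2 * δ * s * b ^ 3 * v 0 * v 1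
        - δ ^ 2 * (a * b ^ 2 + 1) * v 1 ^ 2) * hab - (v 1 ^ 2 + b ^ 6 * v 0 ^ 2) * hs
    have hR : 0 ≤ (1 - b ^ 6) * ((δ * b ^ 3 * v 0 + s * v 1) ^ 2 + v 0 ^ 2) := by
      apply mul_nonneg (by linarith) (by positivity)
    have h4 : (0:ℝ) < b ^ 4 := by positivity
    have hP : 0 ≤ a ^ 2 * (v 0 ^ 2 + v 1 ^ 2) - (δ * b ^ 4 * v 0 + s * b * v 1) ^ 2
        - (-(s * b) * v 0 + δ * a * v 1) ^ 2 := by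
      refine le_of_mul_le_mul_right ?_ h4
      rw [zero_mul]; linarith [key, hR]
    nlinarith [hP, sq_nonneg (v 2)]
  have hlow : a ≤ opNorm3 (!![δ * b ^ 4, s * b, 0; -(s * b), δ * a, 0; 0, 0, a]) := by
    have h := abs_entry_le_opNorm3 (!![δ * b ^ 4, s * b, 0; -(s * b), δ * a, 0; 0, 0, a]) 2 2
    simp at h
    rwa [abs_of_pos ha0] at h
  refine ⟨?_, ?_⟩
  · rw [hMinv]; exact le_antisymm hup hlow
  · intro ε hε1 hε2 hnorm
    have h : a * δ * a ≤ opNorm3 (Dmat α * xmat δ * Dmat α) := by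
      refine le_trans ?_ (abs_entry_le_opNorm3 _ 0 0)
      rw [hM]
      have h00 : (!![a * δ * a, a * -s * b, 0; b * s * a, b * δ * b, 0; 0, 0, b * b] :
          Matrix (Fin 3) (Fin 3) ℝ) 0 0 = a * δ * a := by simp
      rw [h00]
      exact le_abs_self _
    rw [hnorm] at h
    have he : exp ((ε - 1) * α) * (a * a) = exp ((1 + ε) * α) := by
      rw [ha, ← Real.exp_add, ← Real.exp_add]; congr 1; ring
    refine le_of_mul_le_mul_right ?_ (show (0:ℝ) < a * a by positivity)
    rw [he]
    calc δ * (a * a) = a * δ * a := by ring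
      _ ≤ _ := h
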